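/- Let E be a real Banach space, let D ⊆ E be a nonempty open convex set, and let f : D → ℝ be a continuous convex function. Then the (possibly empty) set of points of D at which f is Fréchet differentiable is a G_δ subset of D. -/

import Mathlib

open Metric Set Pointwise

section Stmt4Aux
variable {E : Type*} [NormedAddCommGroup E] [NormedSpace ℝ E]
variable {D : Set E} {f : E → ℝ}

lemma stmt4_slopeA (hf : ConvexOn ℝ D f) {x h : E} {s t : ℝ}
    (hx : x ∈ D) (hs : 0 < s) (hst : s ≤ t) (ht : x + t • h ∈ D) :
    f (x + s • h) - f x ≤ (s / t) * (f (x + t • h) - f x) := by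
  have ht0 : 0 < t := hs.trans_le hst
  have hb : 0 ≤ s / t := by positivity
  have ha : 0 ≤ 1 - s / t := by
    rw [sub_nonneg, div_le_one ht0]; exact hst
  have hab : (1 - s / t) + s / t = 1 := by ring
  have key := hf.2 hx ht ha hb hab
  have hxs : (1 - s / t) • x + (s / t) • (x + t • h) = x + s • h := by
    match_scalars <;> field_simp <;> ring
  rw [hxs] at key
  simp only [smul_eq_mul] at key
  ring_nf at key ⊢
  linarith [key]

lemma stmt4_slopeA' (hf : ConvexOn ℝ D f) {x h : E} {s t : ℝ}
    (hx : x ∈ D) (hs : 0 < s) (hst : s ≤ t) (ht : x - t • h ∈ D) :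
    f (x - s • h) - f x ≤ (s / t) * (f (x - t • h) - f x) := by
  have := stmt4_slopeA (h := -h) hf hx hs hst (by simpa [sub_eq_add_neg] using ht)
  simpa [sub_eq_add_neg] using this

lemma stmt4_slopeB (hf : ConvexOn ℝ D f) {x h : E} {s t : ℝ}
    (hs : 0 < s) (ht : 0 < t) (h1 : x + s • h ∈ D) (h2 : x - t • h ∈ D) :
    s * (f x - f (x - t • h)) ≤ t * (f (x + s • h) - f x) := by
  have hst : 0 < s + t := by linarith
  have ha : 0 ≤ t / (s + t) := by positivity
  have hb : 0 ≤ s / (s + t) := by positivity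
  have hab : t / (s + t) + s / (s + t) = 1 := by
    rw [← add_div, add_comm]; exact div_self hst.ne'
  have key := hf.2 h1 h2 ha hb hab
  have hxs : (t / (s + t)) • (x + s • h) + (s / (s + t)) • (x - t • h) = x := by
    match_scalars <;> field_simp <;> ring
  rw [hxs] at key
  have h3 : (s + t) * f x ≤ t * f (x + s • h) + s * f (x - t • h) := by
    have := mul_le_mul_of_nonneg_left key hst.le
    have hne := hst.ne'
    have e1 : (s + t) * (t / (s + t)) = t := by field_simp
    have e2 : (s + t) * (s / (s + t)) = s := by field_simp
    simp only [smul_eq_mul] at this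
    rw [mul_add, ← mul_assoc, ← mul_assoc, e1, e2] at this
    linarith
  nlinarith [h3]


def stmt4U (D : Set E) (f : E → ℝ) (n : ℕ) : Set E :=
  {x | ∃ t c : ℝ, ∃ L : NNReal, 0 < t ∧ c < t / (n + 1) ∧ closedBall x (2 * t) ⊆ D ∧
    LipschitzOnWith L f (closedBall x (2 * t)) ∧
    ∀ h : E, ‖h‖ ≤ 1 → f (x + t • h) + f (x - t • h) - 2 * f x ≤ c}

lemma stmt4_lip (hDopen : IsOpen D) (hconv : ConvexOn ℝ D f) (hcont : ContinuousOn f D)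
    {x : E} (hx : x ∈ D) :
    ∃ ρ : ℝ, 0 < ρ ∧ closedBall x ρ ⊆ D ∧ ∃ L : NNReal,
      LipschitzOnWith L f (closedBall x ρ) := by
  obtain ⟨r, hr, hrD⟩ := Metric.isOpen_iff.1 hDopen x hx
  have hca : ContinuousAt f x := hcont.continuousAt (hDopen.mem_nhds hx)
  obtain ⟨δ, hδ, hδb⟩ := Metric.continuousAt_iff.1 hca 1 one_pos
  set r₂ : ℝ := min δ r with hr₂def
  have hr₂ : 0 < r₂ := lt_min hδ hr
  have hsub : ball x r₂ ⊆ D := fun y hy => hrD (ball_subset_ball (min_le_right _ _) hy)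
  have hconv' : ConvexOn ℝ (ball x r₂) f := hconv.subset hsub (convex_ball _ _)
  have hM : ∀ a, dist a x < r₂ → |f a| ≤ |f x| + 1 := by
    intro a ha
    have := hδb (lt_of_lt_of_le ha (min_le_left _ _))
    rw [Real.dist_eq] at this
    have h1 : |f a| - |f x| ≤ |f a - f x| := abs_sub_abs_le_abs_sub _ _
    linarith
  have hlip := hconv'.lipschitzOnWith_of_abs_le (ε := r₂ / 2) (by positivity) hM
  refine ⟨r₂ / 4, by positivity, ?_, _, hlip.mono ?_⟩
  · exact fun y hy => hsub (lt_of_le_of_lt (mem_closedBall.1 hy) (by linarith))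
  · intro y hy
    have : dist y x ≤ r₂ / 4 := mem_closedBall.1 hy
    have : dist y x < r₂ - r₂ / 2 := by linarith
    exact this

lemma stmt4_isOpenU (hDconv : Convex ℝ D) (hconv : ConvexOn ℝ D f) (n : ℕ) :
    IsOpen (stmt4U D f n) := by
  rw [Metric.isOpen_iff]
  rintro x ⟨t, c, L, ht, hc, hD2, hLip, hsym⟩
  have hn1 : (0:ℝ) < (n:ℝ) + 1 := by positivity
  have hc0 : 0 ≤ c := by
    have h0 := hsym 0 (by simp)
    simp only [smul_zero, add_zero, sub_zero] at h0
    linarith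
  set γ : ℝ := t / (n + 1) - c with hγdef
  have hγ : 0 < γ := by simp only [hγdef]; linarith
  set ε : ℝ := min (t / 2) (γ / (4 * (L:ℝ) + 2)) with hεdef
  have hL0 : (0:ℝ) ≤ L := L.coe_nonneg
  have hε : 0 < ε := lt_min (by linarith) (by positivity)
  have hεt : ε ≤ t / 2 := min_le_left _ _
  have hεγ : ε ≤ γ / (4 * (L:ℝ) + 2) := min_le_right _ _
  refine ⟨ε, hε, fun y hy => ?_⟩
  have hyx : dist y x < ε := mem_ball.1 hy
  set t' : ℝ := t - ε with ht'def
  have ht' : 0 < t' := by simp only [ht'def]; linarith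
  have ht't : t' ≤ t := by simp only [ht'def]; linarith
  have hsub : closedBall y (2 * t') ⊆ closedBall x (2 * t) := by
    intro z hz
    have h1 : dist z y ≤ 2 * t' := mem_closedBall.1 hz
    have h2 : dist z x ≤ dist z y + dist y x := dist_triangle _ _ _
    exact mem_closedBall.2 (by simp only [ht'def] at h1; linarith)
  have hxD : x ∈ D := hD2 (mem_closedBall.2 (by simp [dist_self]; positivity))
  have hyD : y ∈ D := hD2 (mem_closedBall.2 (by linarith [hyx.le]))
  refine ⟨t', c + 4 * (L:ℝ) * ε, L, ht', ?_, fun z hz => hD2 (hsub hz), hLip.mono hsub, ?_⟩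
  · have h1 : (4 * (L:ℝ) + 1) * ε < γ := by
      have h2 : (4 * (L:ℝ) + 1) * ε ≤ (4 * (L:ℝ) + 1) * (γ / (4 * (L:ℝ) + 2)) :=
        mul_le_mul_of_nonneg_left hεγ (by linarith)
      have h3 : (4 * (L:ℝ) + 1) * (γ / (4 * (L:ℝ) + 2)) < γ := by
        rw [← mul_div_assoc, div_lt_iff₀ (by positivity)]
        nlinarith
      exact h2.trans_lt h3
    have h5 : ε / ((n:ℝ) + 1) ≤ ε := by
      rw [div_le_iff₀ hn1]
      nlinarith [hε.le, Nat.cast_nonneg (α := ℝ) n]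
    have h6 : t' / ((n:ℝ)+1) = t / ((n:ℝ)+1) - ε / ((n:ℝ)+1) := by
      simp only [ht'def]; ring
    simp only [hγdef] at h1
    linarith
  · intro h hh
    have hth : ‖t • h‖ ≤ t := by
      rw [norm_smul, Real.norm_eq_abs, abs_of_pos ht]
      nlinarith
    have ht'h : ‖t' • h‖ ≤ t' := by
      rw [norm_smul, Real.norm_eq_abs, abs_of_pos ht']
      nlinarith
    have hxth : x + t • h ∈ D := hD2 (mem_closedBall.2 (by
      rw [dist_eq_norm]; simp only [add_sub_cancel_left]; linarith))
    have hxth' : x - t • h ∈ D := hD2 (mem_closedBall.2 (by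
      rw [dist_eq_norm]; simp only [sub_sub_cancel_left, norm_neg]; linarith))
    have hA1 := stmt4_slopeA hconv hxD ht' ht't hxth
    have hA2 := stmt4_slopeA' hconv hxD ht' ht't hxth'
    have hsymx : f (x + t' • h) + f (x - t' • h) - 2 * f x ≤ c := by
      have hsx := hsym h hh
      have hd1 : 0 ≤ t' / t := by positivity
      have hd2 : t' / t ≤ 1 := by rw [div_le_one ht]; linarith
      nlinarith [hA1, hA2, hsx, hd1, hd2]
    have hyxn : ‖y - x‖ < ε := by rw [← dist_eq_norm]; exact hyx
    have hLd := LipschitzOnWith.dist_le_mul hLip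
    have hmem1 : y + t' • h ∈ closedBall x (2 * t) := by
      rw [mem_closedBall, dist_eq_norm]
      have he : y + t' • h - x = (y - x) + t' • h := by abel
      rw [he]
      have h7 := norm_add_le (y - x) (t' • h)
      linarith
    have hmem2 : y - t' • h ∈ closedBall x (2 * t) := by
      rw [mem_closedBall, dist_eq_norm]
      have he : y - t' • h - x = (y - x) + -(t' • h) := by abel
      rw [he]
      have h7 := norm_add_le (y - x) (-(t' • h))
      rw [norm_neg] at h7
      linarith
    have hmem3 : x + t' • h ∈ closedBall x (2 * t) := mem_closedBall.2 (by
      rw [dist_eq_norm]; simp only [add_sub_cancel_left]; linarith)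
    have hmem4 : x - t' • h ∈ closedBall x (2 * t) := mem_closedBall.2 (by
      rw [dist_eq_norm]; simp only [sub_sub_cancel_left, norm_neg]; linarith)
    have hmem5 : y ∈ closedBall x (2 * t) := mem_closedBall.2 (by linarith [hyx.le])
    have hmem6 : x ∈ closedBall x (2 * t) := mem_closedBall.2 (by simp [dist_self]; positivity)
    have he1 : dist (f (y + t' • h)) (f (x + t' • h)) ≤ (L:ℝ) * ε := by
      have h8 := hLd _ hmem1 _ hmem3
      have hdd : dist (y + t' • h) (x + t' • h) = dist y x := dist_add_right _ _ _
      rw [hdd] at h8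
      exact h8.trans (mul_le_mul_of_nonneg_left hyx.le hL0)
    have he2 : dist (f (y - t' • h)) (f (x - t' • h)) ≤ (L:ℝ) * ε := by
      have h8 := hLd _ hmem2 _ hmem4
      have hdd : dist (y - t' • h) (x - t' • h) = dist y x := by
        simp only [sub_eq_add_neg]; exact dist_add_right _ _ _
      rw [hdd] at h8
      exact h8.trans (mul_le_mul_of_nonneg_left hyx.le hL0)
    have he3 : dist (f y) (f x) ≤ (L:ℝ) * ε := by
      have h8 := hLd _ hmem5 _ hmem6
      exact h8.trans (mul_le_mul_of_nonneg_left hyx.le hL0)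
    rw [Real.dist_eq] at he1 he2 he3
    have hb1 := abs_le.1 he1
    have hb2 := abs_le.1 he2
    have hb3 := abs_le.1 he3
    linarith [hsymx, hb1.1, hb1.2, hb2.1, hb2.2, hb3.1, hb3.2]

lemma stmt4_mem_U (hDopen : IsOpen D) (hconv : ConvexOn ℝ D f) (hcont : ContinuousOn f D)
    {x : E} (hx : x ∈ D) (hd : DifferentiableAt ℝ f x) (n : ℕ) : x ∈ stmt4U D f n := by
  have hn1 : (0:ℝ) < (n:ℝ) + 1 := by positivity
  have hder := hd.hasFDerivAt
  rw [hasFDerivAt_iff_isLittleO_nhds_zero] at hder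
  set ξ := fderiv ℝ f x with hξdef
  have hev := Asymptotics.isLittleO_iff.1 hder (show (0:ℝ) < 1/(4*((n:ℝ)+1)) by positivity)
  rw [Metric.eventually_nhds_iff] at hev
  obtain ⟨δ, hδ, hb⟩ := hev
  obtain ⟨ρ, hρ, hρD, L, hL⟩ := stmt4_lip hDopen hconv hcont hx
  set t : ℝ := min (ρ/2) (δ/2) with htdef
  have ht : 0 < t := lt_min (by linarith) (by linarith)
  have htρ : 2 * t ≤ ρ := by
    have := min_le_left (ρ/2) (δ/2); simp only [htdef]; linarith
  have htδ : t < δ := by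
    have := min_le_right (ρ/2) (δ/2); simp only [htdef]; linarith
  refine ⟨t, t/(2*((n:ℝ)+1)), L, ht, ?_, ?_, hL.mono (closedBall_subset_closedBall htρ), ?_⟩
  · have h2 : (n:ℝ) + 1 < 2*((n:ℝ)+1) := by linarith
    exact div_lt_div_of_pos_left ht hn1 h2
  · exact fun z hz => hρD (closedBall_subset_closedBall htρ hz)
  · intro h hh
    have hth : ‖t • h‖ ≤ t := by
      rw [norm_smul, Real.norm_eq_abs, abs_of_pos ht]; nlinarith
    have hd1 : dist (t • h) 0 < δ := by rw [dist_zero_right]; linarith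
    have hd2 : dist (-(t • h)) 0 < δ := by rw [dist_zero_right, norm_neg]; linarith
    have e1 := hb hd1
    have e2 := hb hd2
    rw [← sub_eq_add_neg, map_neg] at e2
    rw [Real.norm_eq_abs] at e1 e2
    have hb1 := (abs_le.1 e1).2
    have hb2 := (abs_le.1 e2).2
    have hq : 1/(4*((n:ℝ)+1)) * ‖t • h‖ ≤ 1/(4*((n:ℝ)+1)) * t :=
      mul_le_mul_of_nonneg_left hth (by positivity)
    rw [norm_neg] at hb2
    have heq : 2 * (1/(4*((n:ℝ)+1)) * t) = t/(2*((n:ℝ)+1)) := by field_simp; ring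
    linarith [hb1, hb2, hq, heq]

set_option maxHeartbeats 1000000 in
lemma stmt4_diff (hDconv : Convex ℝ D) (hconv : ConvexOn ℝ D f) {x : E} (hx : x ∈ D)
    (hU : ∀ n, x ∈ stmt4U D f n) : DifferentiableAt ℝ f x := by
  classical
  obtain ⟨t₀, c₀, L, ht₀, hc₀, hD0, hLip0, hsym0⟩ := hU 0
  set r : ℝ := 2 * t₀ with hrdef
  have hr : 0 < r := by positivity
  have hrD : closedBall x r ⊆ D := hD0
  have hLd := LipschitzOnWith.dist_le_mul hLip0
  set q : ℝ → E → ℝ := fun t h => (f (x + t • h) - f x) / t with hqdef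
  set S : E → Set ℝ := fun h => {y | ∃ t, 0 < t ∧ t * ‖h‖ ≤ r ∧ y = q t h} with hSdef
  set p : E → ℝ := fun h => sInf (S h) with hpdef
  have hxc : x ∈ closedBall x r := mem_closedBall.2 (by simp [dist_self]; positivity)
  have hmemCB : ∀ (t : ℝ) (h : E), 0 ≤ t → t * ‖h‖ ≤ r → x + t • h ∈ closedBall x r := by
    intro t h ht hth
    rw [mem_closedBall, dist_eq_norm, add_sub_cancel_left, norm_smul, Real.norm_eq_abs,
      abs_of_nonneg ht]
    exact hth
  have hmemCB' : ∀ (t : ℝ) (h : E), 0 ≤ t → t * ‖h‖ ≤ r → x - t • h ∈ closedBall x r := by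
    intro t h ht hth
    rw [mem_closedBall, dist_eq_norm, sub_sub_cancel_left, norm_neg, norm_smul,
      Real.norm_eq_abs, abs_of_nonneg ht]
    exact hth
  have ht₁pos : ∀ h : E, 0 < r/(1+‖h‖) := fun h => by positivity
  have ht₁adm : ∀ h : E, (r/(1+‖h‖)) * ‖h‖ ≤ r := by
    intro h
    rw [div_mul_eq_mul_div, div_le_iff₀ (by positivity)]
    nlinarith [norm_nonneg h, hr.le]
  have hSne : ∀ h : E, (S h).Nonempty := fun h => ⟨q _ h, _, ht₁pos h, ht₁adm h, rfl⟩
  have hSlb : ∀ h : E, ∀ y ∈ S h, -((L:ℝ) * ‖h‖) ≤ y := by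
    rintro h y ⟨t, ht, hth, rfl⟩
    set u : ℝ := r/(1+‖h‖) with hudef
    have hu : 0 < u := ht₁pos h
    have hadm : u * ‖h‖ ≤ r := ht₁adm h
    have hB := stmt4_slopeB hconv ht hu (hrD (hmemCB t h ht.le hth)) (hrD (hmemCB' u h hu.le hadm))
    have hLip1 : dist (f (x - u • h)) (f x) ≤ (L:ℝ) * (u * ‖h‖) := by
      have h8 := hLd _ (hmemCB' u h hu.le hadm) _ hxc
      have hdd : dist (x - u • h) x = u * ‖h‖ := by
        rw [dist_eq_norm, sub_sub_cancel_left, norm_neg, norm_smul, Real.norm_eq_abs,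
          abs_of_nonneg hu.le]
      rw [hdd] at h8
      exact h8
    rw [Real.dist_eq] at hLip1
    have s1 : -((L:ℝ) * (u * ‖h‖)) ≤ f x - f (x - u • h) := by
      have := (abs_le.1 hLip1).2
      have hsw : |f (x - u • h) - f x| = |(-(f x - f (x - u • h)))| := by ring_nf
      linarith [(abs_le.1 hLip1).2, abs_sub_comm (f (x - u • h)) (f x) ▸ hLip1]
    have s2 : t * (-((L:ℝ) * (u * ‖h‖))) ≤ t * (f x - f (x - u • h)) :=
      mul_le_mul_of_nonneg_left s1 ht.le
    have s3 : t * (-((L:ℝ) * (u * ‖h‖))) ≤ u * (f (x + t • h) - f x) := s2.trans hB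
    simp only [hqdef]
    rw [le_div_iff₀ ht]
    nlinarith [s3, hu, norm_nonneg h]
  have hbdd : ∀ h : E, BddBelow (S h) := fun h => ⟨_, hSlb h⟩
  have hple : ∀ (h : E) (t : ℝ), 0 < t → t * ‖h‖ ≤ r → p h ≤ q t h :=
    fun h t ht hth => csInf_le (hbdd h) ⟨t, ht, hth, rfl⟩
  have hpub : ∀ h : E, p h ≤ (L:ℝ) * ‖h‖ := by
    intro h
    refine (hple h _ (ht₁pos h) (ht₁adm h)).trans ?_
    set u : ℝ := r/(1+‖h‖) with hudef
    have hu : 0 < u := ht₁pos h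
    have hadm : u * ‖h‖ ≤ r := ht₁adm h
    have h8 := hLd _ (hmemCB u h hu.le hadm) _ hxc
    have hdd : dist (x + u • h) x = u * ‖h‖ := by
      rw [dist_eq_norm, add_sub_cancel_left, norm_smul, Real.norm_eq_abs, abs_of_nonneg hu.le]
    rw [hdd, Real.dist_eq] at h8
    have hb1 := (abs_le.1 h8).2
    simp only [hqdef]
    rw [div_le_iff₀ hu]
    nlinarith [hb1]
  have hplb : ∀ h : E, -((L:ℝ) * ‖h‖) ≤ p h := fun h => le_csInf (hSne h) (hSlb h)
  have hqmono : ∀ (h : E) (s t : ℝ), 0 < s → s ≤ t → t * ‖h‖ ≤ r → q s h ≤ q t h := by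
    intro h s t hs hst hth
    have ht0 : 0 < t := hs.trans_le hst
    have hA := stmt4_slopeA hconv hx hs hst (hrD (hmemCB t h ht0.le hth))
    simp only [hqdef]
    rw [div_le_div_iff₀ hs ht0]
    have h2 : (s/t) * (f (x + t • h) - f x) * t = s * (f (x + t • h) - f x) := by
      field_simp
    nlinarith [mul_le_mul_of_nonneg_right hA ht0.le, h2]
  have hphom : ∀ c : ℝ, 0 < c → ∀ h : E, p (c • h) = c * p h := by
    intro c hc h
    have himg : S (c • h) = (fun y => c * y) '' S h := by
      ext y
      simp only [hSdef, mem_setOf_eq, mem_image]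
      constructor
      · rintro ⟨t, ht, hth, rfl⟩
        rw [norm_smul, Real.norm_eq_abs, abs_of_pos hc] at hth
        refine ⟨q (t*c) h, ⟨t*c, by positivity, by nlinarith [hth], rfl⟩, ?_⟩
        simp only [hqdef]
        rw [smul_smul]
        field_simp
      · rintro ⟨y₀, ⟨t, ht, hth, rfl⟩, rfl⟩
        refine ⟨t/c, by positivity, ?_, ?_⟩
        · rw [norm_smul, Real.norm_eq_abs, abs_of_pos hc]
          calc t/c*(c*‖h‖) = t*‖h‖ := by field_simp
            _ ≤ r := hth
        · simp only [hqdef]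
          rw [smul_smul, div_mul_cancel₀ t hc.ne']
          field_simp
    have himg2 : (fun y => c * y) '' S h = c • S h := by
      ext z
      simp only [mem_image, Set.mem_smul_set, smul_eq_mul]
    simp only [hpdef]
    rw [himg, himg2, Real.sInf_smul_of_nonneg hc.le, smul_eq_mul]
  have hpadd : ∀ h k : E, p (h + k) ≤ p h + p k := by
    intro h k
    have key : ∀ y₁ ∈ S h, ∀ y₂ ∈ S k, p (h + k) ≤ y₁ + y₂ := by
      rintro _ ⟨s, hs, hsh, rfl⟩ _ ⟨t, ht, htk, rfl⟩
      set u : ℝ := min s t with hudef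
      have hu0 : 0 < u := lt_min hs ht
      have hus : u ≤ s := min_le_left _ _
      have hut : u ≤ t := min_le_right _ _
      have huh : u * ‖h‖ ≤ r :=
        le_trans (mul_le_mul_of_nonneg_right hus (norm_nonneg h)) hsh
      have huk : u * ‖k‖ ≤ r :=
        le_trans (mul_le_mul_of_nonneg_right hut (norm_nonneg k)) htk
      have hadm : (u/2) * ‖h + k‖ ≤ r := by
        calc (u/2) * ‖h + k‖ ≤ (u/2) * (‖h‖ + ‖k‖) :=
              mul_le_mul_of_nonneg_left (norm_add_le _ _) (by positivity)
          _ = (u * ‖h‖)/2 + (u * ‖k‖)/2 := by ring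
          _ ≤ r := by linarith
      have step1 : p (h + k) ≤ q (u/2) (h + k) := hple _ _ (by positivity) hadm
      have step2 : q (u/2) (h + k) ≤ q u h + q u k := by
        have hmh : x + u • h ∈ D := hrD (hmemCB u h hu0.le huh)
        have hmk : x + u • k ∈ D := hrD (hmemCB u k hu0.le huk)
        have key2 := hconv.2 hmh hmk (by norm_num : (0:ℝ) ≤ 1/2) (by norm_num : (0:ℝ) ≤ 1/2)
          (by norm_num : (1:ℝ)/2 + 1/2 = 1)
        have hco : (1/2 : ℝ) • (x + u • h) + (1/2 : ℝ) • (x + u • k) = x + (u/2) • (h + k) := by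
          match_scalars <;> ring
        rw [hco] at key2
        simp only [smul_eq_mul] at key2
        simp only [hqdef]
        rw [div_le_iff₀ (by positivity : (0:ℝ) < u/2)]
        have hrw : ((f (x + u • h) - f x)/u + (f (x + u • k) - f x)/u) * (u/2)
            = (f (x + u • h) + f (x + u • k))/2 - f x := by
          field_simp
          ring
        linarith [key2, hrw.ge, hrw.le]
      have step3 : q u h ≤ q s h := hqmono h u s hu0 hus hsh
      have step4 : q u k ≤ q t k := hqmono k u t hu0 hut htk
      linarith
    have g1 : ∀ y₁ ∈ S h, p (h + k) - y₁ ≤ p k := fun y₁ hy₁ =>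
      le_csInf (hSne k) (fun y₂ hy₂ => by linarith [key y₁ hy₁ y₂ hy₂])
    have g2 : p (h + k) - p k ≤ p h :=
      le_csInf (hSne h) (fun y₁ hy₁ => by linarith [g1 y₁ hy₁])
    linarith
  have hp0 : 0 ≤ p 0 := by
    refine le_csInf (hSne 0) ?_
    rintro y ⟨t, ht, -, rfl⟩
    simp [hqdef]
  obtain ⟨g, -, hg⟩ := exists_extension_of_le_sublinear ⟨⊥, 0⟩ p hphom hpadd (by
    rintro ⟨z, hz⟩
    rw [Submodule.mem_bot] at hz
    subst hz
    simpa using hp0)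
  have hgb : ∀ h : E, ‖g h‖ ≤ (L:ℝ) * ‖h‖ := by
    intro h
    rw [Real.norm_eq_abs, abs_le]
    constructor
    · have h1 := hg (-h)
      rw [map_neg] at h1
      have h2 := hpub (-h)
      rw [norm_neg] at h2
      linarith
    · exact (hg h).trans (hpub h)
  set ξ : E →L[ℝ] ℝ := LinearMap.mkContinuous g (L:ℝ) hgb with hξdef
  have hξapp : ∀ h : E, ξ h = g h := fun h => rfl
  suffices hF : HasFDerivAt f ξ x from hF.differentiableAt
  rw [hasFDerivAt_iff_isLittleO_nhds_zero, Asymptotics.isLittleO_iff]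
  intro C hC
  obtain ⟨n, hn⟩ := exists_nat_one_div_lt hC
  obtain ⟨t, c, L', ht, hc, hD2, hLip', hsym⟩ := hU n
  rw [Metric.eventually_nhds_iff]
  refine ⟨min t r, lt_min ht hr, fun k hk => ?_⟩
  rw [dist_zero_right] at hk
  have hkt : ‖k‖ < t := hk.trans_le (min_le_left _ _)
  have hkr : ‖k‖ < r := hk.trans_le (min_le_right _ _)
  have hq1 : ∀ m : E, ‖m‖ ≤ r → p m ≤ f (x + m) - f x := by
    intro m hm
    have h1 := hple m 1 one_pos (by simpa using hm)
    simpa [hqdef] using h1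
  have hlow : 0 ≤ f (x + k) - f x - ξ k := by
    have h1 := (hg k).trans (hq1 k hkr.le)
    rw [hξapp]
    linarith
  have hupp : f (x + k) - f x - ξ k ≤ f (x + k) + f (x - k) - 2 * f x := by
    have h1 := (hg (-k)).trans (hq1 (-k) (by rw [norm_neg]; exact hkr.le))
    rw [map_neg, ← sub_eq_add_neg] at h1
    rw [hξapp]
    linarith
  have hsymb : f (x + k) + f (x - k) - 2 * f x ≤ C * ‖k‖ := by
    rcases eq_or_ne k 0 with rfl | hk0
    · simp only [add_zero, sub_zero, norm_zero, mul_zero]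
      linarith
    · have hs : 0 < ‖k‖ := norm_pos_iff.2 hk0
      set h : E := ‖k‖⁻¹ • k with hhdef
      have hh1 : ‖h‖ = 1 := by
        rw [hhdef, norm_smul, Real.norm_eq_abs, abs_of_pos (inv_pos.2 hs), inv_mul_cancel₀ hs.ne']
      have hks : k = ‖k‖ • h := by
        rw [hhdef, smul_smul, mul_inv_cancel₀ hs.ne', one_smul]
      have hth1 : ‖t • h‖ ≤ t := by
        rw [norm_smul, Real.norm_eq_abs, abs_of_pos ht, hh1, mul_one]
      have hxth : x + t • h ∈ D := hD2 (mem_closedBall.2 (by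
        rw [dist_eq_norm, add_sub_cancel_left]; linarith))
      have hxth' : x - t • h ∈ D := hD2 (mem_closedBall.2 (by
        rw [dist_eq_norm, sub_sub_cancel_left, norm_neg]; linarith))
      have hA1 := stmt4_slopeA hconv hx hs hkt.le hxth
      have hA2 := stmt4_slopeA' hconv hx hs hkt.le hxth'
      rw [← hks] at hA1 hA2
      have hsymt := hsym h hh1.le
      have hd1 : 0 ≤ ‖k‖/t := by positivity
      have e1 : (‖k‖/t) * (t/((n:ℝ)+1)) = ‖k‖ * (1/((n:ℝ)+1)) := by
        field_simp
      have e2 : ‖k‖ * (1/((n:ℝ)+1)) ≤ ‖k‖ * C := mul_le_mul_of_nonneg_left hn.le hs.le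
      nlinarith [hA1, hA2, mul_le_mul_of_nonneg_left hsymt hd1,
        mul_le_mul_of_nonneg_left hc.le hd1, e1, e2]
  rw [Real.norm_eq_abs, abs_of_nonneg hlow]
  linarith

end Stmt4Aux

/-- Let `E` be a real Banach space, `D ⊆ E` a nonempty open convex set
and `f : D → ℝ` a continuous convex function. Then the (possibly empty) set of points
of `D` at which `f` is Fréchet differentiable is a `G_δ` subset of `D`. -/
theorem stmt4 {E : Type*} [NormedAddCommGroup E] [NormedSpace ℝ E] [CompleteSpace E]
    (D : Set E) (hDopen : IsOpen D) (hDconv : Convex ℝ D) (hDne : D.Nonempty)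
    (f : E → ℝ) (hconv : ConvexOn ℝ D f) (hcont : ContinuousOn f D) :
    ∃ U : ℕ → Set E, (∀ n, IsOpen (U n)) ∧
      {x | x ∈ D ∧ DifferentiableAt ℝ f x} = D ∩ ⋂ n, U n := by
  refine ⟨stmt4U D f, fun n => stmt4_isOpenU hDconv hconv n, ?_⟩
  ext x
  simp only [Set.mem_setOf_eq, Set.mem_inter_iff, Set.mem_iInter]
  constructor
  · rintro ⟨hx, hd⟩
    exact ⟨hx, fun n => stmt4_mem_U hDopen hconv hcont hx hd n⟩
  · rintro ⟨hx, hU⟩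
    exact ⟨hx, stmt4_diff hDconv hconv hx hU⟩
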